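/- An integral domain D is an AV-domain if and only if D is a quasilocal AB-domain. -/

import Mathlib

/-- `D` is an almost valuation (AV-) domain: for all nonzero `a b : D` there is a positive
integer `n` with `a ^ n ∣ b ^ n` or `b ^ n ∣ a ^ n`. -/
def IsAVDomain (D : Type*) [CommRing D] : Prop :=
  ∀ a b : D, a ≠ 0 → b ≠ 0 → ∃ n : ℕ, 0 < n ∧ (a ^ n ∣ b ^ n ∨ b ^ n ∣ a ^ n)

/-- `D` is an almost Bézout (AB-) domain: for all nonzero `a b : D` there is a positive
integer `n` with the ideal `(a ^ n, b ^ n)` principal. -/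
def IsABDomain (D : Type*) [CommRing D] : Prop :=
  ∀ a b : D, a ≠ 0 → b ≠ 0 →
    ∃ n : ℕ, 0 < n ∧ (Ideal.span {a ^ n, b ^ n} : Ideal D).IsPrincipal

/-- an integral domain `D` is an AV-domain iff it is a quasilocal AB-domain. -/
theorem stmt_1 (D : Type*) [CommRing D] [IsDomain D] :
    IsAVDomain D ↔ IsLocalRing D ∧ IsABDomain D := by
  constructor
  · intro hAV
    constructor
    · apply IsLocalRing.of_isUnit_or_isUnit_one_sub_self
      intro a
      by_cases ha : a = 0
      · right; simp [ha]
      by_cases ha1 : (1 : D) - a = 0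
      · left; rw [sub_eq_zero] at ha1; exact ha1 ▸ isUnit_one
      obtain ⟨n, hn, h⟩ := hAV a (1 - a) ha ha1
      have hc : IsCoprime (a ^ n) ((1 - a) ^ n) :=
        IsCoprime.pow ⟨1, 1, by ring⟩
      rcases h with h | h
      · left
        have hu : IsUnit (a ^ n) := hc.isUnit_of_dvd' dvd_rfl h
        exact (isUnit_pow_iff hn.ne').1 hu
      · right
        have hu : IsUnit ((1 - a) ^ n) := hc.isUnit_of_dvd' h dvd_rfl
        exact (isUnit_pow_iff hn.ne').1 hu
    · intro a b ha hb
      obtain ⟨n, hn, h⟩ := hAV a b ha hb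
      refine ⟨n, hn, ?_⟩
      rcases h with h | h
      · exact ⟨a ^ n, by
          rw [Ideal.span_insert,
            sup_eq_left.2 (Ideal.span_singleton_le_span_singleton.2 h)]⟩
      · exact ⟨b ^ n, by
          rw [Ideal.span_insert,
            sup_eq_right.2 (Ideal.span_singleton_le_span_singleton.2 h)]⟩
  · rintro ⟨hL, hAB⟩ a b ha hb
    obtain ⟨n, hn, ⟨d, hd⟩⟩ := hAB a b ha hb
    refine ⟨n, hn, ?_⟩
    have hda : d ∣ a ^ n := by
      have h1 : a ^ n ∈ Ideal.span {a ^ n, b ^ n} := Ideal.subset_span (by simp)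
      rw [hd] at h1
      exact Ideal.mem_span_singleton.1 h1
    have hdb : d ∣ b ^ n := by
      have h1 : b ^ n ∈ Ideal.span {a ^ n, b ^ n} := Ideal.subset_span (by simp)
      rw [hd] at h1
      exact Ideal.mem_span_singleton.1 h1
    have hdmem : d ∈ Ideal.span {a ^ n, b ^ n} := by
      rw [hd]; exact Ideal.mem_span_singleton_self d
    obtain ⟨x, y, hxy⟩ := Ideal.mem_span_pair.1 hdmem
    obtain ⟨a', ha'⟩ := id hda
    obtain ⟨b', hb'⟩ := id hdb
    have hd0 : d ≠ 0 := by
      rintro rfl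
      exact pow_ne_zero n ha (by simpa using ha')
    have key : x * a' + y * b' = 1 := by
      apply mul_left_cancel₀ hd0
      have h2 : d * (x * a' + y * b') = x * (d * a') + y * (d * b') := by ring
      rw [h2, ← ha', ← hb', hxy, mul_one]
    have := IsLocalRing.isUnit_or_isUnit_of_add_one (a := x * a') (b := y * b') key
    rcases this with hu | hu
    · left
      obtain ⟨u, hu⟩ := isUnit_of_mul_isUnit_right hu
      refine (Dvd.dvd.trans ⟨↑u⁻¹, ?_⟩ hdb : a ^ n ∣ b ^ n)
      rw [ha', ← hu, mul_assoc, Units.mul_inv, mul_one]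
    · right
      obtain ⟨u, hu⟩ := isUnit_of_mul_isUnit_right hu
      refine (Dvd.dvd.trans ⟨↑u⁻¹, ?_⟩ hda : b ^ n ∣ a ^ n)
      rw [hb', ← hu, mul_assoc, Units.mul_inv, mul_one]
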